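/- Let α < 0 and suppose f : ℝ₊³ → ℝ is symmetric (f(x,y,z) = f(σ(x),σ(y),σ(z)) for all permutations σ) and satisfies f(x,y,z) = f(x, y+z, 0) + (y+z)^α f(0, y/(y+z), z/(y+z)) for all x, y, z > 0. Then there exist a ∈ ℝ and φ : ℝ₊₊ → ℝ such that f(x,y,z) = a x^α + a y^α + a z^α + φ(x+y+z) for all x, y, z > 0. -/

import Mathlib

/-- Solutions of the modified entropy equation, case α < 0. -/
theorem stmt_11 (α : ℝ) (hα : α < 0) (f : ℝ → ℝ → ℝ → ℝ)
    (hsym : ∀ x y z : ℝ, 0 ≤ x → 0 ≤ y → 0 ≤ z → ∀ σ : Equiv.Perm (Fin 3),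
      f x y z = f (![x, y, z] (σ 0)) (![x, y, z] (σ 1)) (![x, y, z] (σ 2)))
    (heq : ∀ x y z : ℝ, 0 < x → 0 < y → 0 < z →
      f x y z = f x (y + z) 0 + (y + z) ^ α * f 0 (y / (y + z)) (z / (y + z))) :
    ∃ (a : ℝ) (φ : ℝ → ℝ), ∀ x y z : ℝ, 0 < x → 0 < y → 0 < z →
      f x y z = a * x ^ α + a * y ^ α + a * z ^ α + φ (x + y + z) := by
  -- basic symmetry consequences
  have hswap : ∀ x y z : ℝ, 0 ≤ x → 0 ≤ y → 0 ≤ z → f x y z = f y x z := by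
    intro x y z hx hy hz
    simpa [Equiv.swap_apply_of_ne_of_ne] using hsym x y z hx hy hz (Equiv.swap 0 1)
  have hcyc : ∀ x y z : ℝ, 0 ≤ x → 0 ≤ y → 0 ≤ z → f x y z = f y z x := by
    intro x y z hx hy hz
    simpa using hsym x y z hx hy hz (finRotate 3)
  have hswap23 : ∀ x y z : ℝ, 0 ≤ x → 0 ≤ y → 0 ≤ z → f x y z = f x z y := by
    intro x y z hx hy hz
    simpa [Equiv.swap_apply_of_ne_of_ne] using hsym x y z hx hy hz (Equiv.swap 1 2)
  -- ψ
  set ψ : ℝ → ℝ := fun t => f 0 t (1 - t) with hψdef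
  have hrefl : ∀ t : ℝ, 0 ≤ t → t ≤ 1 → ψ t = ψ (1 - t) := by
    intro t h0 h1
    show f 0 t (1 - t) = f 0 (1 - t) (1 - (1 - t))
    rw [show (1:ℝ) - (1 - t) = t by ring]
    exact hswap23 0 t (1 - t) le_rfl h0 (by linarith)
  have hg : ∀ t : ℝ, 0 ≤ t → t ≤ 1 → f t (1 - t) 0 = ψ t := by
    intro t h0 h1
    show f t (1 - t) 0 = f 0 t (1 - t)
    exact (hcyc t (1 - t) 0 h0 (by linarith) le_rfl).trans
      (hcyc (1 - t) 0 t (by linarith) le_rfl h0)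
  -- fundamental equation of information of degree α on the open domain
  have hFEI : ∀ x y : ℝ, 0 < x → 0 < y → x + y < 1 →
      ψ x + (1 - x) ^ α * ψ (y / (1 - x)) = ψ y + (1 - y) ^ α * ψ (x / (1 - y)) := by
    intro x y hx hy hxy
    have hz0 : (0:ℝ) < 1 - x - y := by linarith
    set z : ℝ := 1 - x - y with hz'
    have hz : 0 < z := hz0
    have h1 := heq x y z hx hy hz
    have h2 := heq y x z hy hx hz
    have e1 : y + z = 1 - x := by rw [hz']; ring
    have e2 : x + z = 1 - y := by rw [hz']; ring
    rw [e1] at h1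
    rw [e2] at h2
    have hx1 : (0:ℝ) < 1 - x := by linarith
    have hy1 : (0:ℝ) < 1 - y := by linarith
    have a1 : z / (1 - x) = 1 - y / (1 - x) := by
      rw [eq_sub_iff_add_eq, ← add_div, div_eq_one_iff_eq hx1.ne']
      rw [hz']; ring
    have a2 : z / (1 - y) = 1 - x / (1 - y) := by
      rw [eq_sub_iff_add_eq, ← add_div, div_eq_one_iff_eq hy1.ne']
      rw [hz']; ring
    rw [a1] at h1
    rw [a2] at h2
    have b1 : f x (1 - x) 0 = ψ x := hg x hx.le (by linarith)
    have b2 : f y (1 - y) 0 = ψ y := hg y hy.le (by linarith)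
    rw [b1] at h1
    rw [b2] at h2
    have hsw := hswap x y z hx.le hy.le hz.le
    rw [hsw, h2] at h1
    simpa [hψdef] using h1.symm
  -- the cocycle Φ
  set Φ : ℝ → ℝ → ℝ := fun u v => (u + v) ^ α * ψ (u / (u + v)) with hΦdef
  have harg : ∀ u v : ℝ, 0 < u → 0 < v → v / (u + v) = 1 - u / (u + v) := by
    intro u v hu hv
    have huv : (0:ℝ) < u + v := by linarith
    rw [eq_sub_iff_add_eq, ← add_div, div_eq_one_iff_eq huv.ne']
    ring
  have hΦsym : ∀ u v : ℝ, 0 < u → 0 < v → Φ u v = Φ v u := by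
    intro u v hu hv
    show (u + v) ^ α * ψ (u / (u + v)) = (v + u) ^ α * ψ (v / (v + u))
    have h1 : v + u = u + v := by ring
    rw [h1, harg u v hu hv,
      ← hrefl (u / (u + v)) (by positivity) (by
        rw [div_le_one (by positivity)]; linarith)]
  have hΦhom : ∀ c u v : ℝ, 0 < c → 0 < u → 0 < v → Φ (c * u) (c * v) = c ^ α * Φ u v := by
    intro c u v hc hu hv
    show (c * u + c * v) ^ α * ψ (c * u / (c * u + c * v))
        = c ^ α * ((u + v) ^ α * ψ (u / (u + v)))
    have h1 : c * u + c * v = c * (u + v) := by ring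
    have h2 : c * u / (c * (u + v)) = u / (u + v) := by
      rw [mul_div_mul_left _ _ (ne_of_gt hc)]
    rw [h1, h2, Real.mul_rpow hc.le (by positivity), mul_assoc]
  -- normalized cocycle identity
  have hc1 : ∀ x y z : ℝ, 0 < x → 0 < y → 0 < z → x + y + z = 1 →
      Φ x y + Φ (x + y) z = Φ x (y + z) + Φ y z := by
    intro x y z hx hy hz hs
    have hx1 : (0:ℝ) < 1 - x := by linarith
    have hz1 : (0:ℝ) < 1 - z := by linarith
    have hy1 : (0:ℝ) < 1 - y := by linarith
    have exy : x + y = 1 - z := by linarith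
    have eyz : y + z = 1 - x := by linarith
    have F1 := hFEI z y hz hy (by linarith)
    have F2 := hFEI x y hx hy (by linarith)
    have T1 : Φ x y = (1 - z) ^ α * ψ (y / (1 - z)) := by
      show (x + y) ^ α * ψ (x / (x + y)) = (1 - z) ^ α * ψ (y / (1 - z))
      rw [exy]
      congr 1
      rw [hrefl (x / (1 - z)) (by positivity) (by rw [div_le_one hz1]; linarith)]
      congr 1
      rw [eq_div_iff hz1.ne', sub_mul, div_mul_cancel₀ _ hz1.ne', one_mul]
      linarith
    have T2 : Φ (x + y) z = ψ z := by
      show (x + y + z) ^ α * ψ ((x + y) / (x + y + z)) = ψ z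
      rw [hs, Real.one_rpow, one_mul, div_one, exy,
        ← hrefl z hz.le (by linarith)]
    have T3 : Φ x (y + z) = ψ x := by
      show (x + (y + z)) ^ α * ψ (x / (x + (y + z))) = ψ x
      have e : x + (y + z) = 1 := by linarith
      rw [e, Real.one_rpow, one_mul, div_one]
    have T4 : Φ y z = (1 - x) ^ α * ψ (y / (1 - x)) := by
      show (y + z) ^ α * ψ (y / (y + z)) = (1 - x) ^ α * ψ (y / (1 - x))
      rw [eyz]
    have T5 : ψ (x / (1 - y)) = ψ (z / (1 - y)) := by
      rw [hrefl (x / (1 - y)) (by positivity) (by rw [div_le_one hy1]; linarith)]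
      congr 1
      rw [eq_div_iff hy1.ne', sub_mul, div_mul_cancel₀ _ hy1.ne', one_mul]
      linarith
    rw [T1, T2, T3, T4]
    rw [T5] at F2
    linarith
  -- general cocycle identity
  have hcoc : ∀ u v w : ℝ, 0 < u → 0 < v → 0 < w →
      Φ u v + Φ (u + v) w = Φ u (v + w) + Φ v w := by
    intro u v w hu hv hw
    have hs : (0:ℝ) < u + v + w := by linarith
    have hsne : u + v + w ≠ 0 := ne_of_gt hs
    have h := hc1 (u / (u + v + w)) (v / (u + v + w)) (w / (u + v + w))
      (by positivity) (by positivity) (by positivity) (by field_simp)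
    have e1 : u / (u + v + w) + v / (u + v + w) = (u + v) / (u + v + w) := by
      rw [← add_div]
    have e2 : v / (u + v + w) + w / (u + v + w) = (v + w) / (u + v + w) := by
      rw [← add_div]
    rw [e1, e2] at h
    have hmul : ∀ p q : ℝ, 0 < p → 0 < q →
        (u + v + w) ^ α * Φ (p / (u + v + w)) (q / (u + v + w)) = Φ p q := by
      intro p q hp hq
      rw [← hΦhom (u + v + w) _ _ hs (by positivity) (by positivity),
        mul_div_cancel₀ _ hsne, mul_div_cancel₀ _ hsne]
    have h' := congrArg (fun r => (u + v + w) ^ α * r) h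
    simp only [mul_add] at h'
    rw [hmul u v hu hv, hmul (u + v) w (by linarith) hw,
      hmul u (v + w) hu (by linarith), hmul v w hv hw] at h'
    exact h'
  -- key closed form for Φ t 1
  have key : ∀ t : ℝ, 0 < t →
      (2 - 2 ^ α) * Φ t 1 = (1 + t ^ α - (t + 1) ^ α) * Φ 1 1 := by
    intro t ht
    have e1 := hcoc t 1 (t + 1) ht one_pos (by linarith)
    have e2 := hcoc t t 2 ht ht two_pos
    have e3 := hcoc t 1 1 ht one_pos one_pos
    have r1 : (1:ℝ) + (t + 1) = t + 2 := by ring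
    have r2 : t + t = 2 * t := by ring
    have r3 : (1:ℝ) + 1 = 2 := by norm_num
    rw [r1] at e1
    rw [r2] at e2
    rw [r3] at e3
    have h1 : Φ t t = t ^ α * Φ 1 1 := by
      have := hΦhom t 1 1 ht one_pos one_pos
      simpa using this
    have h2 : Φ (2 * t) 2 = 2 ^ α * Φ t 1 := by
      have := hΦhom 2 t 1 two_pos ht one_pos
      simpa using this
    have h3 : Φ (t + 1) (t + 1) = (t + 1) ^ α * Φ 1 1 := by
      have := hΦhom (t + 1) 1 1 (by linarith) one_pos one_pos
      simpa using this
    have h4 : Φ 1 (t + 1) = Φ (t + 1) 1 := hΦsym 1 (t + 1) one_pos (by linarith)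
    linear_combination e1 - e2 + e3 + h4 - h3 + h1 + h2
  have h2α : (2:ℝ) ^ α < 1 := Real.rpow_lt_one_of_one_lt_of_neg one_lt_two hα
  have hden : (2:ℝ) - 2 ^ α ≠ 0 := by linarith
  set a : ℝ := Φ 1 1 / (2 - 2 ^ α) with hadef
  have hΦt1 : ∀ t : ℝ, 0 < t → Φ t 1 = a * (1 + t ^ α - (t + 1) ^ α) := by
    intro t ht
    have hk := key t ht
    rw [hadef, div_mul_eq_mul_div, eq_comm, div_eq_iff hden]
    linear_combination -hk
  -- value of ψ
  have hψval : ∀ p : ℝ, 0 < p → p < 1 → ψ p = a * (p ^ α + (1 - p) ^ α - 1) := by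
    intro p hp hp1
    have hq : (0:ℝ) < 1 - p := by linarith
    set t : ℝ := p / (1 - p) with htdef
    have ht : 0 < t := by positivity
    have e1 : (1 - p) * t = p := by
      rw [htdef]; field_simp
    have e2 : (1 - p) * (t + 1) = 1 := by
      rw [htdef]; field_simp; ring
    have s1 : Φ p (1 - p) = ψ p := by
      show (p + (1 - p)) ^ α * ψ (p / (p + (1 - p))) = ψ p
      have : p + (1 - p) = 1 := by ring
      rw [this, Real.one_rpow, one_mul, div_one]
    have s2 : Φ p (1 - p) = (1 - p) ^ α * Φ t 1 := by
      have h := hΦhom (1 - p) t 1 hq ht one_pos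
      rw [e1, mul_one] at h
      exact h
    have s3 : (1 - p) ^ α * t ^ α = p ^ α := by
      rw [← Real.mul_rpow hq.le ht.le, e1]
    have s4 : (1 - p) ^ α * (t + 1) ^ α = 1 := by
      rw [← Real.mul_rpow hq.le (by linarith), e2, Real.one_rpow]
    rw [← s1, s2, hΦt1 t ht]
    linear_combination a * s3 - a * s4
  -- splitting identity
  have hsplit : ∀ x y z : ℝ, 0 < x → 0 < y → 0 < z →
      f x y z = f x (y + z) 0 + a * (y ^ α + z ^ α - (y + z) ^ α) := by
    intro x y z hx hy hz
    have hu : (0:ℝ) < y + z := by linarith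
    have h := heq x y z hx hy hz
    have a1 : z / (y + z) = 1 - y / (y + z) := harg y z hy hz
    rw [a1] at h
    have hv := hψval (y / (y + z)) (by positivity) (by rw [div_lt_one hu]; linarith)
    simp only [hψdef] at hv
    rw [hv] at h
    have c1 : (y + z) ^ α * (y / (y + z)) ^ α = y ^ α := by
      rw [← Real.mul_rpow hu.le (by positivity)]
      congr 1
      field_simp
    have c2 : (y + z) ^ α * (1 - y / (y + z)) ^ α = z ^ α := by
      rw [← a1, ← Real.mul_rpow hu.le (by positivity)]
      congr 1
      field_simp
    rw [h]
    linear_combination a * c1 + a * c2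
  -- bridging step
  have hstep : ∀ s x x' : ℝ, 0 < x → 0 < x' → x + x' < s →
      f x (s - x) 0 - a * x ^ α - a * (s - x) ^ α
        = f x' (s - x') 0 - a * x' ^ α - a * (s - x') ^ α := by
    intro s x x' hx hx' hxs
    have hz : (0:ℝ) < s - x - x' := by linarith
    have A1 := hsplit x x' (s - x - x') hx hx' hz
    have A2 := hsplit x' x (s - x - x') hx' hx hz
    have e1 : x' + (s - x - x') = s - x := by ring
    have e2 : x + (s - x - x') = s - x' := by ring
    rw [e1] at A1
    rw [e2] at A2
    have hsw := hswap x x' (s - x - x') hx.le hx'.le hz.le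
    rw [hsw, A2] at A1
    linarith
  -- conclusion
  set φ0 : ℝ → ℝ :=
    fun s => f (s / 3) (s - s / 3) 0 - a * (s / 3) ^ α - a * (s - s / 3) ^ α with hφ0def
  refine ⟨a, φ0, fun x y z hx hy hz => ?_⟩
  have hφ : φ0 (x + y + z) = f ((x + y + z) / 3) ((x + y + z) - (x + y + z) / 3) 0
      - a * ((x + y + z) / 3) ^ α - a * ((x + y + z) - (x + y + z) / 3) ^ α := by
    simp only [hφ0def]
  set s : ℝ := x + y + z with hsdef
  have hs : 0 < s := by simp only [hsdef]; linarith
  have hxs : x < s := by simp only [hsdef]; linarith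
  set x'' : ℝ := min (s - x) (s / 3) / 2 with hx''def
  have hx'' : 0 < x'' := by
    have : (0:ℝ) < min (s - x) (s / 3) := lt_min (by linarith) (by linarith)
    simp only [hx''def]; linarith
  have hb1 : x + x'' < s := by
    have h := min_le_left (s - x) (s / 3)
    have : x'' ≤ (s - x) / 2 := by simp only [hx''def]; linarith
    linarith
  have hb2 : s / 3 + x'' < s := by
    have h := min_le_right (s - x) (s / 3)
    have : x'' ≤ s / 3 / 2 := by simp only [hx''def]; linarith
    linarith
  have H1 := hstep s x x'' hx hx'' hb1
  have H2 := hstep s (s / 3) x'' (by linarith) hx'' hb2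
  have hyz : s - x = y + z := by simp only [hsdef]; ring
  rw [hyz] at H1
  have hmain := hsplit x y z hx hy hz
  rw [hmain]
  linear_combination H1 - H2 - hφ
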